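/- For integers i with 1 ≤ i ≤ h and reals c, d with 0 ≤ c, d ≤ v, define f̂_{i,c,d} : ℝ → ℝ by f̂_{i,c,d}(x) = exp(−(c+x)/(v^{q−1}·(3 − i/h))) · exp(−(d−x)/(v^{q−1}·(3 − (i+1)/h))). Then: (a) f̂_{i,c,d} is differentiable with derivative f̂'_{i,c,d}(x) = f̂_{i,c,d}(x) · h/(v^{q−1}·(3h−i)·(3h−i−1)); (b) for every real x with 0 ≤ x ≤ v, f̂_{i,c,d}(x) ≥ exp(−3/v^{q−2}) ≥ exp(−3); and (c) for every real x with 1 ≤ x ≤ v, f̂_{i,c,d}(x) − f̂_{i,c,d}(x−1) ≥ exp(−3)/(9·h·v^{q−1}). -/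

import Mathlib

set_option maxHeartbeats 1000000

/-- The exponential surrogate `f̂_{i,c,d}(x)` of the product of two consecutive round
reward polynomials. -/
noncomputable def fhat (v h q : ℕ) (i : ℕ) (c d : ℝ) (x : ℝ) : ℝ :=
  Real.exp (-((c + x) / ((v : ℝ) ^ (q - 1) * (3 - (i : ℝ) / (h : ℝ))))) *
    Real.exp (-((d - x) / ((v : ℝ) ^ (q - 1) * (3 - ((i : ℝ) + 1) / (h : ℝ)))))

lemma aux_deriv (A B c d : ℝ) (x : ℝ) :
    HasDerivAt (fun y : ℝ => Real.exp (-((c + y) / A)) * Real.exp (-((d - y) / B)))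
      (Real.exp (-((c + x) / A)) * Real.exp (-((d - x) / B)) * (1 / B - 1 / A)) x := by
  have h1 : HasDerivAt (fun y : ℝ => -((c + y) / A)) (-(1 / A)) x := by
    have := (((hasDerivAt_id x).const_add c).div_const A).neg
    exact this.congr_deriv (by ring)
  have h2 : HasDerivAt (fun y : ℝ => -((d - y) / B)) (1 / B) x := by
    have := (((hasDerivAt_id x).const_sub d).div_const B).neg
    exact this.congr_deriv (by ring)
  have := (h1.exp).mul (h2.exp)
  exact this.congr_deriv (by ring)

lemma aux_step (A B c d x : ℝ) (hA : A ≠ 0) (hB : B ≠ 0) :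
    Real.exp (-((c + x) / A) + -((d - x) / B))
      = Real.exp (-((c + (x - 1)) / A) + -((d - (x - 1)) / B)) * Real.exp (1 / B - 1 / A) := by
  rw [← Real.exp_add, Real.exp_eq_exp]
  field_simp
  ring

/-- (a) `f̂_{i,c,d}` is differentiable with derivative
`f̂_{i,c,d}(x) · h/(v^{q−1}·(3h−i)·(3h−i−1))`; (b) for `0 ≤ x ≤ v`,
`f̂_{i,c,d}(x) ≥ exp(−3/v^{q−2}) ≥ exp(−3)`; and (c) for `1 ≤ x ≤ v`,
`f̂_{i,c,d}(x) − f̂_{i,c,d}(x−1) ≥ exp(−3)/(9·h·v^{q−1})`. -/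
theorem fhat_properties (v h q : ℕ) (hv : 2 ≤ v) (hh : 1 ≤ h) (hq : 2 ≤ q)
    (i : ℕ) (hi1 : 1 ≤ i) (hih : i ≤ h)
    (c d : ℝ) (hc0 : 0 ≤ c) (hcv : c ≤ (v : ℝ)) (hd0 : 0 ≤ d) (hdv : d ≤ (v : ℝ)) :
    (∀ x : ℝ, HasDerivAt (fhat v h q i c d)
        (fhat v h q i c d x *
          ((h : ℝ) / ((v : ℝ) ^ (q - 1) * (3 * (h : ℝ) - (i : ℝ)) *
            (3 * (h : ℝ) - (i : ℝ) - 1)))) x) ∧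
    (∀ x : ℝ, 0 ≤ x → x ≤ (v : ℝ) →
        Real.exp (-(3 : ℝ) / (v : ℝ) ^ (q - 2)) ≤ fhat v h q i c d x ∧
        Real.exp (-(3 : ℝ)) ≤ Real.exp (-(3 : ℝ) / (v : ℝ) ^ (q - 2))) ∧
    (∀ x : ℝ, 1 ≤ x → x ≤ (v : ℝ) →
        Real.exp (-(3 : ℝ)) / (9 * (h : ℝ) * (v : ℝ) ^ (q - 1))
          ≤ fhat v h q i c d x - fhat v h q i c d (x - 1)) := by
  have hH : (1:ℝ) ≤ (h:ℝ) := by exact_mod_cast hh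
  have hV : (2:ℝ) ≤ (v:ℝ) := by exact_mod_cast hv
  have hI1 : (1:ℝ) ≤ (i:ℝ) := by exact_mod_cast hi1
  have hIH : (i:ℝ) ≤ (h:ℝ) := by exact_mod_cast hih
  have hHpos : (0:ℝ) < (h:ℝ) := by linarith
  have hHne : (h:ℝ) ≠ 0 := ne_of_gt hHpos
  have hP1 : (1:ℝ) ≤ (v:ℝ) ^ (q - 1) := one_le_pow₀ (by linarith)
  have hPpos : (0:ℝ) < (v:ℝ) ^ (q - 1) := by linarith
  have hq2 : (1:ℝ) ≤ (v:ℝ) ^ (q - 2) := one_le_pow₀ (by linarith)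
  have hq2pos : (0:ℝ) < (v:ℝ) ^ (q - 2) := by linarith
  have hpow : (v:ℝ) ^ (q - 1) = (v:ℝ) ^ (q - 2) * (v:ℝ) := by
    rw [← pow_succ]
    congr 1
    omega
  have hIdivH : (i:ℝ) / (h:ℝ) ≤ 1 := (div_le_one hHpos).mpr hIH
  have hIdivH0 : (0:ℝ) ≤ (i:ℝ) / (h:ℝ) := div_nonneg (by linarith) (le_of_lt hHpos)
  have hA2 : (2:ℝ) ≤ 3 - (i:ℝ) / (h:ℝ) := by linarith
  have hi2 : ((i:ℝ) + 1) / (h:ℝ) ≤ 2 := by rw [div_le_iff₀ hHpos]; linarith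
  have hi20 : (0:ℝ) ≤ ((i:ℝ) + 1) / (h:ℝ) := div_nonneg (by linarith) (le_of_lt hHpos)
  have hB1 : (1:ℝ) ≤ 3 - ((i:ℝ) + 1) / (h:ℝ) := by linarith
  set A : ℝ := (v:ℝ) ^ (q - 1) * (3 - (i:ℝ) / (h:ℝ)) with hAdef
  set B : ℝ := (v:ℝ) ^ (q - 1) * (3 - ((i:ℝ) + 1) / (h:ℝ)) with hBdef
  have hApos : 0 < A := mul_pos hPpos (by linarith)
  have hBpos : 0 < B := mul_pos hPpos (by linarith)
  have hAge : 2 * (v:ℝ) ^ (q - 1) ≤ A := by rw [hAdef]; nlinarith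
  have hBge : (v:ℝ) ^ (q - 1) ≤ B := by rw [hBdef]; nlinarith
  have h3HI : (1:ℝ) ≤ 3 * (h:ℝ) - (i:ℝ) := by linarith
  have h3HI1 : (1:ℝ) ≤ 3 * (h:ℝ) - (i:ℝ) - 1 := by linarith
  have hfe : ∀ x : ℝ, fhat v h q i c d x = Real.exp (-((c + x) / A) + -((d - x) / B)) := by
    intro x; rw [fhat, Real.exp_add]
  have hδ : 1 / B - 1 / A
      = (h:ℝ) / ((v:ℝ) ^ (q - 1) * (3 * (h:ℝ) - (i:ℝ)) * (3 * (h:ℝ) - (i:ℝ) - 1)) := by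
    have hA' : A = (v:ℝ) ^ (q - 1) * (3 * (h:ℝ) - (i:ℝ)) / (h:ℝ) := by
      rw [hAdef]; field_simp
    have hB' : B = (v:ℝ) ^ (q - 1) * (3 * (h:ℝ) - (i:ℝ) - 1) / (h:ℝ) := by
      rw [hBdef]; field_simp; ring
    have hne1 : 3 * (h:ℝ) - (i:ℝ) ≠ 0 := by linarith
    have hne2 : 3 * (h:ℝ) - (i:ℝ) - 1 ≠ 0 := by linarith
    have hne3 : (v:ℝ) ^ (q - 1) ≠ 0 := ne_of_gt hPpos
    rw [hA', hB']
    field_simp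
    ring
  have hfeq : fhat v h q i c d = fun y : ℝ =>
      Real.exp (-((c + y) / A)) * Real.exp (-((d - y) / B)) := rfl
  have hAne : A ≠ 0 := ne_of_gt hApos
  have hBne : B ≠ 0 := ne_of_gt hBpos
  clear_value A B
  -- part (b) as a reusable fact
  have hb : ∀ x : ℝ, 0 ≤ x → x ≤ (v:ℝ) →
      Real.exp (-(3:ℝ) / (v:ℝ) ^ (q - 2)) ≤ fhat v h q i c d x := by
    intro x hx0 hxv
    rw [hfe, Real.exp_le_exp]
    have h1 : (c + x) / A ≤ (v:ℝ) / (v:ℝ) ^ (q - 1) := by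
      calc (c + x) / A ≤ (2 * (v:ℝ)) / (2 * (v:ℝ) ^ (q - 1)) :=
            div_le_div₀ (by linarith) (by linarith) (by linarith) hAge
        _ = (v:ℝ) / (v:ℝ) ^ (q - 1) := by
            rw [mul_div_mul_left _ _ (by norm_num : (2:ℝ) ≠ 0)]
    have h2 : (d - x) / B ≤ (v:ℝ) / (v:ℝ) ^ (q - 1) :=
      div_le_div₀ (by linarith) (by linarith) (by linarith) hBge
    have h3 : (v:ℝ) / (v:ℝ) ^ (q - 1) = 1 / (v:ℝ) ^ (q - 2) := by
      rw [hpow]; field_simp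
    rw [h3] at h1 h2
    have h5 : (-3:ℝ) / (v:ℝ) ^ (q - 2) = -(3 / (v:ℝ) ^ (q - 2)) := by ring
    have h6 : (3:ℝ) / (v:ℝ) ^ (q - 2) - 1 / (v:ℝ) ^ (q - 2) - 1 / (v:ℝ) ^ (q - 2)
        = 1 / (v:ℝ) ^ (q - 2) := by ring
    have h7 : (0:ℝ) ≤ 1 / (v:ℝ) ^ (q - 2) := by positivity
    linarith
  have hb3 : Real.exp (-(3:ℝ)) ≤ Real.exp (-(3:ℝ) / (v:ℝ) ^ (q - 2)) := by
    rw [Real.exp_le_exp, le_div_iff₀ hq2pos]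
    linarith
  refine ⟨?_, ?_, ?_⟩
  · intro x
    rw [← hδ, hfeq]
    exact aux_deriv A B c d x
  · intro x hx0 hxv
    exact ⟨hb x hx0 hxv, hb3⟩
  · intro x hx1 hxv
    have h3HIpos : (0:ℝ) < 3 * (h:ℝ) - (i:ℝ) := by linarith
    have h3HI1pos : (0:ℝ) < 3 * (h:ℝ) - (i:ℝ) - 1 := by linarith
    have hδpos : 0 < 1 / B - 1 / A := by
      rw [hδ]
      exact div_pos hHpos (mul_pos (mul_pos hPpos h3HIpos) h3HI1pos)
    have hstep : fhat v h q i c d x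
        = fhat v h q i c d (x - 1) * Real.exp (1 / B - 1 / A) := by
      rw [hfe, hfe]
      exact aux_step A B c d x hAne hBne
    have hlb : Real.exp (-(3:ℝ)) ≤ fhat v h q i c d (x - 1) :=
      le_trans hb3 (hb (x - 1) (by linarith) (by linarith))
    have hkey : (3 * (h:ℝ) - (i:ℝ)) * (3 * (h:ℝ) - (i:ℝ) - 1) ≤ 9 * (h:ℝ) ^ 2 := by
      nlinarith [mul_le_mul_of_nonneg_left hIH (by linarith : (0:ℝ) ≤ (i:ℝ))]
    have hδlb : 1 / (9 * (h:ℝ) * (v:ℝ) ^ (q - 1)) ≤ 1 / B - 1 / A := by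
      rw [hδ, div_le_div_iff₀ (by positivity)
        (mul_pos (mul_pos hPpos h3HIpos) h3HI1pos)]
      nlinarith [mul_le_mul_of_nonneg_left hkey (le_of_lt hPpos)]
    have h1δ : (1 / B - 1 / A) + 1 ≤ Real.exp (1 / B - 1 / A) := by
      have := Real.add_one_le_exp (1 / B - 1 / A); linarith
    have hfpos : 0 < fhat v h q i c d (x - 1) := by rw [hfe]; positivity
    calc Real.exp (-(3:ℝ)) / (9 * (h:ℝ) * (v:ℝ) ^ (q - 1))
        = Real.exp (-(3:ℝ)) * (1 / (9 * (h:ℝ) * (v:ℝ) ^ (q - 1))) := by ring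
      _ ≤ Real.exp (-(3:ℝ)) * (1 / B - 1 / A) :=
          mul_le_mul_of_nonneg_left hδlb (le_of_lt (Real.exp_pos _))
      _ ≤ fhat v h q i c d (x - 1) * (1 / B - 1 / A) :=
          mul_le_mul_of_nonneg_right hlb (le_of_lt hδpos)
      _ ≤ fhat v h q i c d (x - 1) * (Real.exp (1 / B - 1 / A) - 1) :=
          mul_le_mul_of_nonneg_left (by linarith) (le_of_lt hfpos)
      _ = fhat v h q i c d x - fhat v h q i c d (x - 1) := by rw [hstep]; ring
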